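/- Let R be a normed ring and M a finitely generated R-module. Any two filling norms on M are equivalent: there exists C > 0 such that C⁻¹‖m‖ ≤ ‖m‖' ≤ C‖m‖ for all m ∈ M. -/

import Mathlib

variable {R : Type*} [Ring R]

/-- The ℓ¹-norm on the finitely generated based free `R`-module `Λ → R`. -/
noncomputable def l1Norm {Λ : Type*} [Fintype Λ] (ν : RingNorm R) (f : Λ → R) : ℝ :=
  ∑ x, ν (f x)

/-- The filling norm on `M` induced by a surjection `ρ : (Λ → R) → M`. -/
noncomputable def fillingNorm {Λ : Type*} [Fintype Λ] {M : Type*} [AddCommGroup M] [Module R M]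
    (ν : RingNorm R) (ρ : (Λ → R) →ₗ[R] M) (m : M) : ℝ :=
  sInf {c : ℝ | ∃ x : Λ → R, ρ x = m ∧ l1Norm ν x = c}

lemma l1Norm_nonneg {Λ : Type*} [Fintype Λ] (ν : RingNorm R) (f : Λ → R) :
    0 ≤ l1Norm ν f :=
  Finset.sum_nonneg fun _ _ => apply_nonneg ν _

lemma filling_bdd {Λ : Type*} [Fintype Λ] {M : Type*} [AddCommGroup M] [Module R M]
    (ν : RingNorm R) (ρ : (Λ → R) →ₗ[R] M) (m : M) :
    BddBelow {c : ℝ | ∃ x : Λ → R, ρ x = m ∧ l1Norm ν x = c} := by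
  refine ⟨0, fun c hc => ?_⟩
  obtain ⟨x, -, rfl⟩ := hc
  exact l1Norm_nonneg ν x

lemma fillingNorm_le {Λ : Type*} [Fintype Λ] {M : Type*} [AddCommGroup M] [Module R M]
    (ν : RingNorm R) (ρ : (Λ → R) →ₗ[R] M) {m : M} {x : Λ → R} (hx : ρ x = m) :
    fillingNorm ν ρ m ≤ l1Norm ν x :=
  csInf_le (filling_bdd ν ρ m) ⟨x, hx, rfl⟩

lemma exists_bound {Λ₁ Λ₂ : Type*} [Fintype Λ₁] [Fintype Λ₂]
    {M : Type*} [AddCommGroup M] [Module R M] (ν : RingNorm R)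
    (ρ₁ : (Λ₁ → R) →ₗ[R] M) (hρ₁ : Function.Surjective ρ₁)
    (ρ₂ : (Λ₂ → R) →ₗ[R] M) (hρ₂ : Function.Surjective ρ₂) :
    ∃ K : ℝ, 0 < K ∧ ∀ m : M, fillingNorm ν ρ₂ m ≤ K * fillingNorm ν ρ₁ m := by
  classical
  choose y hy using fun lam : Λ₁ => hρ₂ (ρ₁ (Pi.single lam 1))
  set K : ℝ := (∑ lam, l1Norm ν (y lam)) + 1 with hK
  have hKpos : 0 < K := by
    have : 0 ≤ ∑ lam, l1Norm ν (y lam) :=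
      Finset.sum_nonneg fun _ _ => l1Norm_nonneg ν _
    linarith
  refine ⟨K, hKpos, fun m => ?_⟩
  rw [← div_le_iff₀' hKpos]
  unfold fillingNorm
  refine le_csInf ?_ ?_
  · obtain ⟨x, hx⟩ := hρ₁ m
    exact ⟨l1Norm ν x, x, hx, rfl⟩
  · rintro c ⟨x, hx, rfl⟩
    rw [div_le_iff₀' hKpos]
    set Tx : Λ₂ → R := fun mu => ∑ lam, x lam * y lam mu with hTx
    have hT : ρ₂ Tx = m := by
      have h1 : Tx = ∑ lam, x lam • y lam := by
        funext mu
        simp [hTx, Finset.sum_apply]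
      rw [h1, map_sum]
      simp only [map_smul, hy]
      simp only [← map_smul ρ₁, ← map_sum ρ₁]
      rw [← hx]
      congr 1
      funext mu
      simp [Finset.sum_apply, Pi.single_apply, Finset.sum_ite_eq', mul_one]
    calc fillingNorm ν ρ₂ m ≤ l1Norm ν Tx := fillingNorm_le ν ρ₂ hT
      _ ≤ ∑ mu, ∑ lam, ν (x lam) * ν (y lam mu) := by
          refine Finset.sum_le_sum fun mu _ => ?_
          refine le_trans (Finset.le_sum_of_subadditive ν (map_zero ν).le (map_add_le_add ν) _ _) ?_
          exact Finset.sum_le_sum fun lam _ => ν.mul_le' _ _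
      _ = ∑ lam, ν (x lam) * l1Norm ν (y lam) := by
          rw [Finset.sum_comm]
          simp [l1Norm, Finset.mul_sum]
      _ ≤ ∑ lam, ν (x lam) * K := by
          refine Finset.sum_le_sum fun lam _ => ?_
          refine mul_le_mul_of_nonneg_left ?_ (apply_nonneg ν _)
          have h2 : l1Norm ν (y lam) ≤ ∑ l', l1Norm ν (y l') :=
            Finset.single_le_sum (fun l' _ => l1Norm_nonneg ν (y l')) (Finset.mem_univ lam)
          linarith
      _ = K * l1Norm ν x := by rw [← Finset.sum_mul, mul_comm]; rfl

/-- Any two filling norms on a finitely generated `R`-module are equivalent: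
there is `C > 0` with `C⁻¹ * ‖m‖ ≤ ‖m‖' ≤ C * ‖m‖` for all `m`. -/
theorem fillingNorms_equivalent {Λ₁ Λ₂ : Type*} [Fintype Λ₁] [Fintype Λ₂]
    {M : Type*} [AddCommGroup M] [Module R M] (ν : RingNorm R)
    (ρ₁ : (Λ₁ → R) →ₗ[R] M) (hρ₁ : Function.Surjective ρ₁)
    (ρ₂ : (Λ₂ → R) →ₗ[R] M) (hρ₂ : Function.Surjective ρ₂) :
    ∃ C : ℝ, 0 < C ∧ ∀ m : M,
      C⁻¹ * fillingNorm ν ρ₁ m ≤ fillingNorm ν ρ₂ m ∧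
      fillingNorm ν ρ₂ m ≤ C * fillingNorm ν ρ₁ m := by
  obtain ⟨K₁, hK₁, h₁⟩ := exists_bound ν ρ₁ hρ₁ ρ₂ hρ₂
  obtain ⟨K₂, hK₂, h₂⟩ := exists_bound ν ρ₂ hρ₂ ρ₁ hρ₁
  refine ⟨max K₁ K₂, lt_max_of_lt_left hK₁, fun m => ?_⟩
  have hC : 0 < max K₁ K₂ := lt_max_of_lt_left hK₁
  have hf₁ : 0 ≤ fillingNorm ν ρ₁ m := by
    refine le_csInf ?_ ?_
    · obtain ⟨x, hx⟩ := hρ₁ m; exact ⟨_, x, hx, rfl⟩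
    · rintro c ⟨x, -, rfl⟩; exact l1Norm_nonneg ν x
  have hf₂ : 0 ≤ fillingNorm ν ρ₂ m := by
    refine le_csInf ?_ ?_
    · obtain ⟨x, hx⟩ := hρ₂ m; exact ⟨_, x, hx, rfl⟩
    · rintro c ⟨x, -, rfl⟩; exact l1Norm_nonneg ν x
  constructor
  · rw [inv_mul_le_iff₀ hC]
    calc fillingNorm ν ρ₁ m ≤ K₂ * fillingNorm ν ρ₂ m := h₂ m
      _ ≤ max K₁ K₂ * fillingNorm ν ρ₂ m :=
        mul_le_mul_of_nonneg_right (le_max_right _ _) hf₂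
  · calc fillingNorm ν ρ₂ m ≤ K₁ * fillingNorm ν ρ₁ m := h₁ m
      _ ≤ max K₁ K₂ * fillingNorm ν ρ₁ m :=
        mul_le_mul_of_nonneg_right (le_max_left _ _) hf₁
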